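/- arXiv:2002.10367 — 6 statements merged into one kernel-verified Lean document; each statement's English description precedes it below -/
import Mathlib

section
/- Let G be a simple graph on at least seven vertices such that for every triple of distinct vertices v1, v2, v3, at least two of them are adjacent. Then G contains two distinct 3-cycles (triangles) that share an edge. -/
open Finset

/-- A simple graph on at least seven vertices in which every triple of
distinct vertices contains at least one edge has two distinct triangles
sharing an edge. -/
theorem two_triangles_sharing_edge {V : Type*} [Fintype V]
    (G : SimpleGraph V) (hcard : 7 ≤ Fintype.card V)
    (h : ∀ v₁ v₂ v₃ : V, v₁ ≠ v₂ → v₁ ≠ v₃ → v₂ ≠ v₃ →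
      G.Adj v₁ v₂ ∨ G.Adj v₁ v₃ ∨ G.Adj v₂ v₃) :
    ∃ a b c d : V, c ≠ d ∧ G.Adj a b ∧ G.Adj a c ∧ G.Adj b c ∧
      G.Adj a d ∧ G.Adj b d := by
  classical
  by_contra hcon
  push_neg at hcon
  have hcom : ∀ p q r : V, q ≠ p → r ≠ p → q ≠ r → ¬G.Adj q p → ¬G.Adj r p →
      G.Adj q r := by
    intro p q r h1 h2 h3 n1 n2
    rcases h p q r (Ne.symm h1) (Ne.symm h2) h3 with h' | h' | h'
    · exact absurd h'.symm n1
    · exact absurd h'.symm n2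
    · exact h'
  set N : V → Finset V := fun a => univ.filter (fun w => w ≠ a ∧ ¬G.Adj a w) with hN
  have hmemN : ∀ a w, w ∈ N a ↔ (w ≠ a ∧ ¬G.Adj a w) := by
    intro a w; simp [hN]
  -- every vertex has at most 2 non-neighbors
  have L1 : ∀ v : V, (N v).card ≤ 2 := by
    intro v
    by_contra hge
    push_neg at hge
    obtain ⟨x, hxmem⟩ := Finset.card_pos.mp (show 0 < (N v).card by omega)
    have h2c : 1 < ((N v).erase x).card := by
      rw [Finset.card_erase_of_mem hxmem]; omega
    obtain ⟨y, hy, z, hz, hyz⟩ := Finset.one_lt_card.mp h2c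
    have hyx : y ≠ x := Finset.ne_of_mem_erase hy
    have hzx : z ≠ x := Finset.ne_of_mem_erase hz
    have hymem := Finset.mem_of_mem_erase hy
    have hzmem := Finset.mem_of_mem_erase hz
    obtain ⟨hxv, hvx⟩ := (hmemN v x).mp hxmem
    obtain ⟨hyv, hvy⟩ := (hmemN v y).mp hymem
    obtain ⟨hzv, hvz⟩ := (hmemN v z).mp hzmem
    have hxy : G.Adj x y := hcom v x y hxv hyv (Ne.symm hyx)
      (fun a => hvx a.symm) (fun a => hvy a.symm)
    have hxz : G.Adj x z := hcom v x z hxv hzv (Ne.symm hzx)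
      (fun a => hvx a.symm) (fun a => hvz a.symm)
    have hyz' : G.Adj y z := hcom v y z hyv hzv hyz
      (fun a => hvy a.symm) (fun a => hvz a.symm)
    set S4 : Finset V := {v, x, y, z} with hS4
    have hS4card : S4.card ≤ 4 := by
      calc S4.card ≤ ({x, y, z} : Finset V).card + 1 := Finset.card_insert_le _ _
        _ ≤ (({y, z} : Finset V).card + 1) + 1 := by
            have := Finset.card_insert_le x ({y, z} : Finset V); omega
        _ ≤ ((({z} : Finset V).card + 1) + 1) + 1 := by
            have := Finset.card_insert_le y ({z} : Finset V); omega
        _ ≤ 4 := by simp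
    have houtcard : 3 ≤ (univ \ S4).card := by
      rw [Finset.card_sdiff_of_subset (Finset.subset_univ _), Finset.card_univ]
      omega
    have hw : ∀ w, w ∉ S4 → ((¬G.Adj w x ∧ ¬G.Adj w y) ∨ (¬G.Adj w x ∧ ¬G.Adj w z) ∨
        (¬G.Adj w y ∧ ¬G.Adj w z)) := by
      intro w hwS
      simp only [hS4, Finset.mem_insert, Finset.mem_singleton] at hwS
      push_neg at hwS
      obtain ⟨hwv, hwx, hwy, hwz⟩ := hwS
      have k1 : ¬(G.Adj w x ∧ G.Adj w y) := fun ⟨p, q⟩ =>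
        hcon x y z w (Ne.symm hwz) hxy hxz hyz' p.symm q.symm
      have k2 : ¬(G.Adj w x ∧ G.Adj w z) := fun ⟨p, q⟩ =>
        hcon x z y w (Ne.symm hwy) hxz hxy hyz'.symm p.symm q.symm
      have k3 : ¬(G.Adj w y ∧ G.Adj w z) := fun ⟨p, q⟩ =>
        hcon y z x w (Ne.symm hwx) hyz' hxy.symm hxz.symm p.symm q.symm
      by_cases A : G.Adj w x
      · by_cases B : G.Adj w y
        · exact absurd ⟨A, B⟩ k1
        · by_cases C : G.Adj w z
          · exact absurd ⟨A, C⟩ k2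
          · exact Or.inr (Or.inr ⟨B, C⟩)
      · by_cases B : G.Adj w y
        · by_cases C : G.Adj w z
          · exact absurd ⟨B, C⟩ k3
          · exact Or.inr (Or.inl ⟨A, C⟩)
        · exact Or.inl ⟨A, B⟩
    have hww : ∀ w w', w ∉ S4 → w' ∉ S4 → w ≠ w' → G.Adj w w' := by
      intro w w' hwS hw'S hne
      have hw1 := hw w hwS
      have hw2 := hw w' hw'S
      simp only [hS4, Finset.mem_insert, Finset.mem_singleton] at hwS hw'S
      push_neg at hwS hw'S
      have t1 : ¬G.Adj w x → ¬G.Adj w' x → G.Adj w w' := fun a b =>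
        hcom x w w' hwS.2.1 hw'S.2.1 hne a b
      have t2 : ¬G.Adj w y → ¬G.Adj w' y → G.Adj w w' := fun a b =>
        hcom y w w' hwS.2.2.1 hw'S.2.2.1 hne a b
      have t3 : ¬G.Adj w z → ¬G.Adj w' z → G.Adj w w' := fun a b =>
        hcom z w w' hwS.2.2.2 hw'S.2.2.2 hne a b
      rcases hw1 with ⟨a1, a2⟩ | ⟨a1, a2⟩ | ⟨a1, a2⟩ <;>
        rcases hw2 with ⟨b1, b2⟩ | ⟨b1, b2⟩ | ⟨b1, b2⟩ <;>
        first
          | exact t1 a1 b1 | exact t1 a1 b2 | exact t1 a2 b1 | exact t1 a2 b2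
          | exact t2 a1 b1 | exact t2 a1 b2 | exact t2 a2 b1 | exact t2 a2 b2
          | exact t3 a1 b1 | exact t3 a1 b2 | exact t3 a2 b1 | exact t3 a2 b2
    have hvw : ∀ w, w ∉ S4 → G.Adj v w := by
      intro w hwS
      have hw1 := hw w hwS
      simp only [hS4, Finset.mem_insert, Finset.mem_singleton] at hwS
      push_neg at hwS
      have t1 : ¬G.Adj w x → G.Adj v w := fun a =>
        hcom x v w (Ne.symm hxv) hwS.2.1 (Ne.symm hwS.1) hvx a
      have t2 : ¬G.Adj w y → G.Adj v w := fun a =>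
        hcom y v w (Ne.symm hyv) hwS.2.2.1 (Ne.symm hwS.1) hvy a
      have t3 : ¬G.Adj w z → G.Adj v w := fun a =>
        hcom z v w (Ne.symm hzv) hwS.2.2.2 (Ne.symm hwS.1) hvz a
      rcases hw1 with ⟨a1, a2⟩ | ⟨a1, a2⟩ | ⟨a1, a2⟩ <;>
        first | exact t1 a1 | exact t2 a1
    obtain ⟨w1, hw1mem⟩ := Finset.card_pos.mp (by omega : 0 < (univ \ S4).card)
    have herase : 1 < ((univ \ S4).erase w1).card := by
      rw [Finset.card_erase_of_mem hw1mem]; omega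
    obtain ⟨w2, hw2e, w3, hw3e, h23⟩ := Finset.one_lt_card.mp herase
    have h21 : w2 ≠ w1 := Finset.ne_of_mem_erase hw2e
    have h31 : w3 ≠ w1 := Finset.ne_of_mem_erase hw3e
    have hw1S : w1 ∉ S4 := (Finset.mem_sdiff.mp hw1mem).2
    have hw2S : w2 ∉ S4 := (Finset.mem_sdiff.mp (Finset.mem_of_mem_erase hw2e)).2
    have hw3S : w3 ∉ S4 := (Finset.mem_sdiff.mp (Finset.mem_of_mem_erase hw3e)).2
    have hvin : v ∈ S4 := by simp [hS4]
    exact hcon w1 w2 v w3 (fun e => hw3S (e ▸ hvin)) (hww w1 w2 hw1S hw2S (Ne.symm h21))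
      (hvw w1 hw1S).symm (hvw w2 hw2S).symm (hww w1 w3 hw1S hw3S (Ne.symm h31))
      (hww w2 w3 hw2S hw3S h23)
  -- find an edge (a,b) with a small excluded set
  have key : ∃ (a b : V) (T : Finset V), G.Adj a b ∧ T.card ≤ 5 ∧
      ∀ w, w ∉ T → G.Adj a w ∧ G.Adj b w := by
    by_cases hdeg : ∃ v, (N v).card ≤ 1
    · obtain ⟨v, hv⟩ := hdeg
      have hb : 0 < (univ \ insert v (N v)).card := by
        rw [Finset.card_sdiff_of_subset (Finset.subset_univ _), Finset.card_univ]
        have := Finset.card_insert_le v (N v); omega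
      obtain ⟨b, hbmem⟩ := Finset.card_pos.mp hb
      rw [Finset.mem_sdiff, Finset.mem_insert] at hbmem
      push_neg at hbmem
      obtain ⟨-, hbv, hbN⟩ := hbmem
      have hab : G.Adj v b := by
        by_contra hna; exact hbN ((hmemN v b).mpr ⟨hbv, hna⟩)
      refine ⟨v, b, insert v (insert b (N v ∪ N b)), hab, ?_, ?_⟩
      · have c1 := Finset.card_union_le (N v) (N b)
        have c2 := L1 b
        have i1 := Finset.card_insert_le b (N v ∪ N b)
        have i2 := Finset.card_insert_le v (insert b (N v ∪ N b))
        omega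
      · intro w hwT
        simp only [Finset.mem_insert, Finset.mem_union] at hwT
        push_neg at hwT
        obtain ⟨hwv, hwb, hwNv, hwNb⟩ := hwT
        constructor
        · by_contra hna; exact hwNv ((hmemN v w).mpr ⟨hwv, hna⟩)
        · by_contra hna; exact hwNb ((hmemN b w).mpr ⟨hwb, hna⟩)
    · push_neg at hdeg
      have hne : Nonempty V := Fintype.card_pos_iff.mp (by omega)
      obtain ⟨m⟩ := hne
      have hm := hdeg m
      obtain ⟨u, hu, v, hv, huv⟩ := Finset.one_lt_card.mp hm
      obtain ⟨hum, hmu⟩ := (hmemN m u).mp hu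
      obtain ⟨hvm, hmv⟩ := (hmemN m v).mp hv
      have hab : G.Adj u v := hcom m u v hum hvm huv
        (fun a => hmu a.symm) (fun a => hmv a.symm)
      refine ⟨u, v, insert u (insert v (insert m ((N u).erase m ∪ (N v).erase m))),
        hab, ?_, ?_⟩
      · have hmu' : m ∈ N u := (hmemN u m).mpr ⟨Ne.symm hum, fun a => hmu a.symm⟩
        have hmv' : m ∈ N v := (hmemN v m).mpr ⟨Ne.symm hvm, fun a => hmv a.symm⟩
        have c1 : ((N u).erase m).card ≤ 1 := by
          rw [Finset.card_erase_of_mem hmu']; have := L1 u; omega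
        have c2 : ((N v).erase m).card ≤ 1 := by
          rw [Finset.card_erase_of_mem hmv']; have := L1 v; omega
        have c3 := Finset.card_union_le ((N u).erase m) ((N v).erase m)
        have i1 := Finset.card_insert_le m (((N u).erase m) ∪ ((N v).erase m))
        have i2 := Finset.card_insert_le v (insert m (((N u).erase m) ∪ ((N v).erase m)))
        have i3 := Finset.card_insert_le u
          (insert v (insert m (((N u).erase m) ∪ ((N v).erase m))))
        omega
      · intro w hwT
        simp only [Finset.mem_insert, Finset.mem_union, Finset.mem_erase] at hwT
        push_neg at hwT
        obtain ⟨hwu, hwv, hwm, hw1, hw2⟩ := hwT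
        constructor
        · by_contra hna; exact (hw1 hwm) ((hmemN u w).mpr ⟨hwu, hna⟩)
        · by_contra hna; exact (hw2 hwm) ((hmemN v w).mpr ⟨hwv, hna⟩)
  obtain ⟨a, b, T, hab, hT, hadj⟩ := key
  have hcd : 1 < (univ \ T).card := by
    rw [Finset.card_sdiff_of_subset (Finset.subset_univ _), Finset.card_univ]; omega
  obtain ⟨c, hc, d, hd, hcdne⟩ := Finset.one_lt_card.mp hcd
  have hcT : c ∉ T := (Finset.mem_sdiff.mp hc).2
  have hdT : d ∉ T := (Finset.mem_sdiff.mp hd).2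
  obtain ⟨hac, hbc⟩ := hadj c hcT
  obtain ⟨had, hbd⟩ := hadj d hdT
  exact hcon a b c d hcdne hab hac hbc had hbd
end

section
/- Let G be a simple graph on at least seven vertices containing no two distinct triangles sharing an edge. Then G has three vertices that are pairwise non-adjacent (an independent set of size 3). -/
/-- A simple graph on at least seven vertices with no two distinct triangles
sharing an edge has an independent set of size 3. -/
theorem independent_triple_of_no_shared_triangles {V : Type*} [Fintype V]
    (G : SimpleGraph V) (hcard : 7 ≤ Fintype.card V)
    (h : ¬ ∃ a b c d : V, c ≠ d ∧ G.Adj a b ∧ G.Adj a c ∧ G.Adj b c ∧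
      G.Adj a d ∧ G.Adj b d) :
    ∃ v₁ v₂ v₃ : V, v₁ ≠ v₂ ∧ v₁ ≠ v₃ ∧ v₂ ≠ v₃ ∧
      ¬ G.Adj v₁ v₂ ∧ ¬ G.Adj v₁ v₃ ∧ ¬ G.Adj v₂ v₃ := by
  classical
  by_contra hI
  push_neg at hI
  -- any three distinct vertices contain an edge
  have hE : ∀ x y z : V, x ≠ y → x ≠ z → y ≠ z →
      G.Adj x y ∨ G.Adj x z ∨ G.Adj y z := by
    intro x y z hxy hxz hyz
    by_contra hc
    push_neg at hc
    exact hc.2.2 (hI x y z hxy hxz hyz hc.1 hc.2.1)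
  -- Step 1: find a triangle
  obtain ⟨a, b, c, hab', hac', hbc', hab, hac, hbc⟩ :
      ∃ a b c : V, a ≠ b ∧ a ≠ c ∧ b ≠ c ∧ G.Adj a b ∧ G.Adj a c ∧ G.Adj b c := by
    have hne : Nonempty V := Fintype.card_pos_iff.mp (by omega)
    obtain ⟨v⟩ := hne
    set s : Finset V := Finset.univ.erase v with hs
    have hsc : 6 ≤ s.card := by
      have := Finset.card_erase_of_mem (Finset.mem_univ v)
      rw [hs, this, Finset.card_univ]
      omega
    set N := s.filter (fun w => G.Adj v w) with hN
    set M := s.filter (fun w => ¬ G.Adj v w) with hM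
    have hNM : N.card + M.card = s.card := by
      rw [hN, hM]; exact Finset.card_filter_add_card_filter_not _
    rcases le_or_gt 3 N.card with hN3 | hN3
    · obtain ⟨x, y, z, hx, hy, hz, hxy, hxz, hyz⟩ :=
        Finset.two_lt_card_iff.mp (by omega : 2 < N.card)
      rw [hN, Finset.mem_filter] at hx hy hz
      rcases hE x y z hxy hxz hyz with h1 | h1 | h1
      · exact ⟨v, x, y, hx.2.ne, hy.2.ne, hxy, hx.2, hy.2, h1⟩
      · exact ⟨v, x, z, hx.2.ne, hz.2.ne, hxz, hx.2, hz.2, h1⟩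
      · exact ⟨v, y, z, hy.2.ne, hz.2.ne, hyz, hy.2, hz.2, h1⟩
    · have hM3 : 2 < M.card := by omega
      obtain ⟨x, y, z, hx, hy, hz, hxy, hxz, hyz⟩ := Finset.two_lt_card_iff.mp hM3
      rw [hM, Finset.mem_filter, hs, Finset.mem_erase] at hx hy hz
      have e1 : G.Adj x y := by
        rcases hE v x y (Ne.symm hx.1.1) (Ne.symm hy.1.1) hxy with h1 | h1 | h1
        · exact absurd h1 hx.2
        · exact absurd h1 hy.2
        · exact h1
      have e2 : G.Adj x z := by
        rcases hE v x z (Ne.symm hx.1.1) (Ne.symm hz.1.1) hxz with h1 | h1 | h1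
        · exact absurd h1 hx.2
        · exact absurd h1 hz.2
        · exact h1
      have e3 : G.Adj y z := by
        rcases hE v y z (Ne.symm hy.1.1) (Ne.symm hz.1.1) hyz with h1 | h1 | h1
        · exact absurd h1 hy.2
        · exact absurd h1 hz.2
        · exact h1
      exact ⟨x, y, z, hxy, hxz, hyz, e1, e2, e3⟩
  -- Step 2: every vertex outside the triangle is non-adjacent to at least two
  -- of its vertices
  have hpat : ∀ w : V, w ≠ a → w ≠ b → w ≠ c →
      (¬ G.Adj w a ∧ ¬ G.Adj w b) ∨ (¬ G.Adj w b ∧ ¬ G.Adj w c) ∨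
      (¬ G.Adj w a ∧ ¬ G.Adj w c) := by
    intro w hwa hwb hwc
    by_cases h1 : G.Adj w a
    · by_cases h2 : G.Adj w b
      · exact absurd ⟨a, b, c, w, Ne.symm hwc, hab, hac, hbc, h1.symm, h2.symm⟩ h
      · by_cases h3 : G.Adj w c
        · exact absurd ⟨a, c, b, w, Ne.symm hwb, hac, hab, hbc.symm, h1.symm, h3.symm⟩ h
        · exact Or.inr (Or.inl ⟨h2, h3⟩)
    · by_cases h3 : G.Adj w c
      · by_cases h2 : G.Adj w b
        · exact absurd ⟨b, c, a, w, Ne.symm hwa, hbc, hab.symm, hac.symm, h2.symm, h3.symm⟩ h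
        · exact Or.inl ⟨h1, h2⟩
      · exact Or.inr (Or.inr ⟨h1, h3⟩)
  -- Step 3: any two distinct outside vertices are adjacent
  have hadj : ∀ u w : V, u ≠ a → u ≠ b → u ≠ c → w ≠ a → w ≠ b → w ≠ c →
      u ≠ w → G.Adj u w := by
    intro u w hua hub huc hwa hwb hwc huw
    have key : ∀ x : V, u ≠ x → w ≠ x → ¬ G.Adj u x → ¬ G.Adj w x → G.Adj u w := by
      intro x hux hwx n1 n2
      rcases hE u w x huw hux hwx with h1 | h1 | h1
      · exact h1
      · exact absurd h1 n1
      · exact absurd h1 n2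
    have ka := key a hua hwa
    have kb := key b hub hwb
    have kc := key c huc hwc
    have pu := hpat u hua hub huc
    have pw := hpat w hwa hwb hwc
    tauto
  -- four outside vertices
  set t : Finset V := Finset.univ \ {a, b, c} with ht
  have htc : 4 ≤ t.card := by
    have h1 : t.card = Fintype.card V - ({a, b, c} : Finset V).card := by
      rw [ht, Finset.card_sdiff_of_subset (Finset.subset_univ _), Finset.card_univ]
    have h2 : ({a, b, c} : Finset V).card ≤ 3 := by
      apply le_trans (Finset.card_insert_le _ _)
      have := Finset.card_insert_le b ({c} : Finset V)
      simp at this ⊢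
      omega
    omega
  have hmem : ∀ w : V, w ∈ t → w ≠ a ∧ w ≠ b ∧ w ≠ c := by
    intro w hw
    rw [ht, Finset.mem_sdiff] at hw
    have := hw.2
    simp [Finset.mem_insert] at this
    tauto
  obtain ⟨w1, hw1⟩ := Finset.card_pos.mp (show 0 < t.card by omega)
  have hc2 : 0 < (t.erase w1).card := by
    rw [Finset.card_erase_of_mem hw1]; omega
  obtain ⟨w2, hw2⟩ := Finset.card_pos.mp hc2
  have hc3 : 0 < ((t.erase w1).erase w2).card := by
    rw [Finset.card_erase_of_mem hw2, Finset.card_erase_of_mem hw1]; omega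
  obtain ⟨w3, hw3⟩ := Finset.card_pos.mp hc3
  have hc4 : 0 < (((t.erase w1).erase w2).erase w3).card := by
    rw [Finset.card_erase_of_mem hw3, Finset.card_erase_of_mem hw2,
      Finset.card_erase_of_mem hw1]; omega
  obtain ⟨w4, hw4⟩ := Finset.card_pos.mp hc4
  rw [Finset.mem_erase] at hw2
  rw [Finset.mem_erase, Finset.mem_erase] at hw3
  rw [Finset.mem_erase, Finset.mem_erase, Finset.mem_erase] at hw4
  obtain ⟨h1a, h1b, h1c⟩ := hmem w1 hw1
  obtain ⟨h2a, h2b, h2c⟩ := hmem w2 hw2.2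
  obtain ⟨h3a, h3b, h3c⟩ := hmem w3 hw3.2.2
  obtain ⟨h4a, h4b, h4c⟩ := hmem w4 hw4.2.2.2
  exact h ⟨w1, w2, w3, w4, Ne.symm hw4.1,
    hadj w1 w2 h1a h1b h1c h2a h2b h2c (fun hh => hw2.1 hh.symm),
    hadj w1 w3 h1a h1b h1c h3a h3b h3c (fun hh => hw3.2.1 hh.symm),
    hadj w2 w3 h2a h2b h2c h3a h3b h3c (fun hh => hw3.1 hh.symm),
    hadj w1 w4 h1a h1b h1c h4a h4b h4c (fun hh => hw4.2.2.1 hh.symm),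
    hadj w2 w4 h2a h2b h2c h4a h4b h4c (fun hh => hw4.2.1 hh.symm)⟩
end

section
/- Let f be a homogeneous cubic over C vanishing on E1 = V(x0,x1), E2 = V(x2,x3), E3 = V(x0-x2,x1-x3), and let g(t) be the associated cubic g(t) = alpha_{2,0,1,0} t^3 + (alpha_{2,0,0,1} + alpha_{1,1,1,0}) t^2 + (alpha_{0,2,1,0} + alpha_{1,1,0,1}) t + alpha_{0,2,0,1}. Then for t in C, the line V(x0 - t*x1, x2 - t*x3) is contained in V(f) if and only if g(t) = 0. -/
/-- The general homogeneous cubic form in four variables, with coefficient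
`aIJKL` of the monomial `x0^I * x1^J * x2^K * x3^L`. -/
def cubicForm (a3000 a0300 a0030 a0003 a2100 a2010 a2001 a1200 a0210 a0201
    a1020 a0120 a0021 a1002 a0102 a0012 a1110 a1101 a1011 a0111 : ℂ)
    (x0 x1 x2 x3 : ℂ) : ℂ :=
  a3000 * x0 ^ 3 + a0300 * x1 ^ 3 + a0030 * x2 ^ 3 + a0003 * x3 ^ 3
    + a2100 * x0 ^ 2 * x1 + a2010 * x0 ^ 2 * x2 + a2001 * x0 ^ 2 * x3
    + a1200 * x0 * x1 ^ 2 + a0210 * x1 ^ 2 * x2 + a0201 * x1 ^ 2 * x3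
    + a1020 * x0 * x2 ^ 2 + a0120 * x1 * x2 ^ 2 + a0021 * x2 ^ 2 * x3
    + a1002 * x0 * x3 ^ 2 + a0102 * x1 * x3 ^ 2 + a0012 * x2 * x3 ^ 2
    + a1110 * x0 * x1 * x2 + a1101 * x0 * x1 * x3 + a1011 * x0 * x2 * x3
    + a0111 * x1 * x2 * x3

/-- If a homogeneous cubic f vanishes on E₁, E₂, E₃, then the line
V(x₀ - t·x₁, x₂ - t·x₃) is contained in V(f) iff g(t) = 0, where g is the
associated cubic. -/
theorem line_in_cubic_iff_root (a3000 a0300 a0030 a0003 a2100 a2010 a2001 a1200 a0210 a0201 a1020 a0120 a0021 a1002 a0102 a0012 a1110 a1101 a1011 a0111 : ℂ)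
    (F : ℂ → ℂ → ℂ → ℂ → ℂ)
    (hF : F = cubicForm a3000 a0300 a0030 a0003 a2100 a2010 a2001 a1200 a0210 a0201 a1020 a0120 a0021 a1002 a0102 a0012 a1110 a1101 a1011 a0111)
    (hE1 : ∀ a b : ℂ, F 0 0 a b = 0)
    (hE2 : ∀ a b : ℂ, F a b 0 0 = 0)
    (hE3 : ∀ a b : ℂ, F a b a b = 0) :
    ∀ t : ℂ, (∀ u v : ℂ, F (t * u) u (t * v) v = 0) ↔
      a2010 * t ^ 3 + (a2001 + a1110) * t ^ 2 +
        (a0210 + a1101) * t + a0201 = 0 := by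
  subst hF
  simp only [cubicForm] at hE1 hE2 hE3 ⊢
  -- coefficient relations from vanishing on E1
  have b0030 : a0030 = 0 := by linear_combination hE1 1 0
  have b0003 : a0003 = 0 := by linear_combination hE1 0 1
  have b0021 : a0021 = 0 := by
    linear_combination (hE1 1 1 - hE1 1 (-1)) / 2 - b0003
  have b0012 : a0012 = 0 := by
    linear_combination (hE1 1 1 + hE1 1 (-1)) / 2 - b0030
  -- coefficient relations from vanishing on E2
  have b3000 : a3000 = 0 := by linear_combination hE2 1 0
  have b0300 : a0300 = 0 := by linear_combination hE2 0 1
  have b2100 : a2100 = 0 := by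
    linear_combination (hE2 1 1 - hE2 1 (-1)) / 2 - b0300
  have b1200 : a1200 = 0 := by
    linear_combination (hE2 1 1 + hE2 1 (-1)) / 2 - b3000
  -- coefficient relations from vanishing on E3
  have r1 : a1020 = -a2010 := by
    linear_combination hE3 1 0 - b3000 - b0030
  have r2 : a0102 = -a0201 := by
    linear_combination hE3 0 1 - b0300 - b0003
  have r3 : a0120 + a1011 = -(a2001 + a1110) := by
    linear_combination (hE3 1 1 - hE3 1 (-1)) / 2 - hE3 0 1 - b2100 - b0021
  have r4 : a1002 + a0111 = -(a0210 + a1101) := by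
    linear_combination (hE3 1 1 + hE3 1 (-1)) / 2 - hE3 1 0 - b1200 - b0012
  intro t
  constructor
  · intro h
    linear_combination (h 1 1 - h 1 (-1)) / 2 - h 0 1
  · intro hg u v
    linear_combination (u ^ 2 * v - u * v ^ 2) * hg
      + u ^ 3 * t ^ 3 * b3000 + u ^ 3 * t ^ 2 * b2100 + u ^ 3 * t * b1200
      + u ^ 3 * b0300
      + v ^ 3 * t ^ 3 * b0030 + v ^ 3 * t ^ 2 * b0021 + v ^ 3 * t * b0012
      + v ^ 3 * b0003
      + u * v ^ 2 * t ^ 3 * r1 + u * v ^ 2 * t ^ 2 * r3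
      + u * v ^ 2 * t * r4 + u * v ^ 2 * r2
end

section
/- Let f be a homogeneous cubic over C vanishing on E1 = V(x0,x1), E2 = V(x2,x3), E3 = V(x0-x2,x1-x3), and let t_i be a root of the associated cubic g. Then f(t_i*x1, x1, x2, x3) factors as x1 * (x2 - t_i*x3) * l, where l = (t_i^2 alpha_{2,0,1,0} + t_i alpha_{1,1,1,0} + alpha_{0,2,1,0}) x1 + (t_i alpha_{1,0,2,0} + alpha_{0,1,2,0}) x2 + (t_i^2 alpha_{1,0,2,0} + t_i(alpha_{0,1,2,0} + alpha_{1,0,1,1}) + alpha_{0,1,1,1}) x3. -/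
/-- Factorization of f(tᵢ·x₁, x₁, x₂, x₃) as x₁·(x₂ - tᵢ·x₃)·ℓ, where tᵢ is a
root of the associated cubic g and the coefficients satisfy equation (1). -/
theorem factorization_H1 (a3000 a0300 a0030 a0003 a2100 a2010 a2001 a1200 a0210 a0201 a1020 a0120 a0021 a1002 a0102 a0012 a1110 a1101 a1011 a0111 : ℂ)
    (h1 : a3000 = 0) (h2 : a0300 = 0) (h3 : a0030 = 0) (h4 : a0003 = 0)
    (h5 : a2100 = 0) (h6 : a1200 = 0) (h7 : a0021 = 0) (h8 : a0012 = 0)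
    (h9 : a0201 + a0102 = 0) (h10 : a2010 + a1020 = 0)
    (h11 : a0210 + a1002 + a1101 + a0111 = 0)
    (h12 : a0120 + a2001 + a1011 + a1110 = 0)
    (t : ℂ)
    (hroot : a2010 * t ^ 3 + (a2001 + a1110) * t ^ 2 +
      (a0210 + a1101) * t + a0201 = 0) :
    ∀ x1 x2 x3 : ℂ,
      cubicForm a3000 a0300 a0030 a0003 a2100 a2010 a2001 a1200 a0210 a0201 a1020 a0120 a0021 a1002 a0102 a0012 a1110 a1101 a1011 a0111 (t * x1) x1 x2 x3 =
        x1 * (x2 - t * x3) *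
          ((t ^ 2 * a2010 + t * a1110 + a0210) * x1 +
            (t * a1020 + a0120) * x2 +
            (t ^ 2 * a1020 + t * (a0120 + a1011) + a0111) * x3) := by
  intro x1 x2 x3
  simp only [cubicForm]
  linear_combination (t^3*x1^3)*h1 + x1^3*h2 + x2^3*h3 + x3^3*h4 + (t^2*x1^3)*h5
    + (t*x1^3)*h6 + (x2^2*x3)*h7 + (x2*x3^2)*h8 + (x1*x3^2)*h9 + (t^3*x1*x3^2)*h10
    + (t*x1*x3^2)*h11 + (t^2*x1*x3^2)*h12 + (x1^2*x3 - x1*x3^2)*hroot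
end

section
/- Let f be a homogeneous cubic over C vanishing on E1, E2, E3 as above, and let t_i be a root of the associated cubic g. Then f(x0, x1, t_i*x3, x3) factors as x3 * (x0 - t_i*x1) * l, where l = (t_i alpha_{2,0,1,0} + alpha_{2,0,0,1}) x0 + (t_i^2 alpha_{2,0,1,0} + t_i(alpha_{2,0,0,1} + alpha_{1,1,1,0}) + alpha_{1,1,0,1}) x1 + (t_i^2 alpha_{1,0,2,0} + t_i alpha_{1,0,1,1} + alpha_{1,0,0,2}) x3. -/
/-- Factorization of f(x₀, x₁, tᵢ·x₃, x₃) as x₃·(x₀ - tᵢ·x₁)·ℓ, where tᵢ is a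
root of the associated cubic g and the coefficients satisfy equation (1). -/
theorem factorization_H2 (a3000 a0300 a0030 a0003 a2100 a2010 a2001 a1200 a0210 a0201 a1020 a0120 a0021 a1002 a0102 a0012 a1110 a1101 a1011 a0111 : ℂ)
    (h1 : a3000 = 0) (h2 : a0300 = 0) (h3 : a0030 = 0) (h4 : a0003 = 0)
    (h5 : a2100 = 0) (h6 : a1200 = 0) (h7 : a0021 = 0) (h8 : a0012 = 0)
    (h9 : a0201 + a0102 = 0) (h10 : a2010 + a1020 = 0)
    (h11 : a0210 + a1002 + a1101 + a0111 = 0)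
    (h12 : a0120 + a2001 + a1011 + a1110 = 0)
    (t : ℂ)
    (hroot : a2010 * t ^ 3 + (a2001 + a1110) * t ^ 2 +
      (a0210 + a1101) * t + a0201 = 0) :
    ∀ x0 x1 x3 : ℂ,
      cubicForm a3000 a0300 a0030 a0003 a2100 a2010 a2001 a1200 a0210 a0201 a1020 a0120 a0021 a1002 a0102 a0012 a1110 a1101 a1011 a0111 x0 x1 (t * x3) x3 =
        x3 * (x0 - t * x1) *
          ((t * a2010 + a2001) * x0 +
            (t ^ 2 * a2010 + t * (a2001 + a1110) + a1101) * x1 +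
            (t ^ 2 * a1020 + t * a1011 + a1002) * x3) := by
  intro x0 x1 x3
  subst h1 h2 h3 h4 h5 h6 h7 h8
  unfold cubicForm
  linear_combination (x1^2*x3 - x1*x3^2) * hroot +
    x1*x3^2 * (t^3 * h10 + t^2 * h12 + t * h11 + h9)
end

section
/- Let f be a homogeneous cubic over C vanishing on E1, E2, E3 as above, and let t_i be a root of the associated cubic g. Then f(x2 + t_i*(x1 - x3), x1, x2, x3) factors as (x1 - x3) * (x2 - t_i*x3) * l, where l = (t_i^2 alpha_{2,0,1,0} + t_i alpha_{1,1,1,0} + alpha_{0,2,1,0}) x1 + (t_i alpha_{2,0,1,0} + alpha_{0,1,2,0} + alpha_{1,1,1,0}) x2 + (t_i alpha_{2,0,0,1} - alpha_{1,0,0,2}) x3. -/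
/-- Factorization of f(x₂ + tᵢ·(x₁ - x₃), x₁, x₂, x₃) as
(x₁ - x₃)·(x₂ - tᵢ·x₃)·ℓ, where tᵢ is a root of the associated cubic g and the
coefficients satisfy equation (1). -/
theorem factorization_H3 (a3000 a0300 a0030 a0003 a2100 a2010 a2001 a1200 a0210 a0201 a1020 a0120 a0021 a1002 a0102 a0012 a1110 a1101 a1011 a0111 : ℂ)
    (h1 : a3000 = 0) (h2 : a0300 = 0) (h3 : a0030 = 0) (h4 : a0003 = 0)
    (h5 : a2100 = 0) (h6 : a1200 = 0) (h7 : a0021 = 0) (h8 : a0012 = 0)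
    (h9 : a0201 + a0102 = 0) (h10 : a2010 + a1020 = 0)
    (h11 : a0210 + a1002 + a1101 + a0111 = 0)
    (h12 : a0120 + a2001 + a1011 + a1110 = 0)
    (t : ℂ)
    (hroot : a2010 * t ^ 3 + (a2001 + a1110) * t ^ 2 +
      (a0210 + a1101) * t + a0201 = 0) :
    ∀ x1 x2 x3 : ℂ,
      cubicForm a3000 a0300 a0030 a0003 a2100 a2010 a2001 a1200 a0210 a0201 a1020 a0120 a0021 a1002 a0102 a0012 a1110 a1101 a1011 a0111 (x2 + t * (x1 - x3)) x1 x2 x3 =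
        (x1 - x3) * (x2 - t * x3) *
          ((t ^ 2 * a2010 + t * a1110 + a0210) * x1 +
            (t * a2010 + a0120 + a1110) * x2 +
            (t * a2001 - a1002) * x3) := by
  intro x1 x2 x3
  subst h1 h2 h3 h4 h5 h6 h7 h8
  unfold cubicForm
  linear_combination (x1^2*x3 - x1*x3^2) * hroot + (x1*x3^2) * h9 +
    (x2^3 - t*x2^2*x3 + t*x1*x2^2) * h10 + (x1*x2*x3) * h11 +
    (x2^2*x3 - t*x2*x3^2 + t*x1*x2*x3) * h12
end
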